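/- For all positive integers m ≥ n, with k = √((m² − n²)/(m² + 2mn)), the following identity holds: √2·π·∫₀^{2π} (m² + 2mn + n² − (m² − n²)cos 2x)/√(m² + 4mn + n² − (m² − n²)cos 2x) dx = 8π·(√(m² + 2mn)·E(k) − (mn/√(m² + 2mn))·K(k)). (This computes the area of the torus M_{m,n} = φ_{m,n}(ℝ²) ⊂ S⁵ in terms of complete elliptic integrals.) -/

import Mathlib

open Real MeasureTheory

/-- The complete elliptic integral of the first kind,
`K(k) = ∫₀¹ dx/(√(1−x²)·√(1−k²x²))`. -/
noncomputable def ellK (k : ℝ) : ℝ :=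
  ∫ x in (0 : ℝ)..1, 1 / (Real.sqrt (1 - x ^ 2) * Real.sqrt (1 - k ^ 2 * x ^ 2))

/-- The complete elliptic integral of the second kind,
`E(k) = ∫₀¹ √(1−k²x²)/√(1−x²) dx`. -/
noncomputable def ellE (k : ℝ) : ℝ :=
  ∫ x in (0 : ℝ)..1, Real.sqrt (1 - k ^ 2 * x ^ 2) / Real.sqrt (1 - x ^ 2)

lemma cos_image_Ioo : Real.cos '' Set.Ioo 0 (Real.pi/2) = Set.Ioo 0 1 := by
  ext y
  constructor
  · rintro ⟨x, hx, rfl⟩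
    refine ⟨Real.cos_pos_of_mem_Ioo ⟨by linarith [hx.1, Real.pi_pos], hx.2⟩, ?_⟩
    have := Real.strictAntiOn_cos (Set.left_mem_Icc.2 Real.pi_pos.le)
      ⟨hx.1.le, by linarith [hx.2, Real.pi_pos]⟩ hx.1
    simpa [Real.cos_zero] using this
  · rintro ⟨h0, h1⟩
    refine ⟨Real.arccos y, ⟨Real.arccos_pos.2 h1, Real.arccos_lt_pi_div_two.2 h0⟩,
      Real.cos_arccos (by linarith) h1.le⟩

lemma cov (f : ℝ → ℝ) :
    ∫ t in (0:ℝ)..1, f t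
      = ∫ x in Set.Ioo 0 (Real.pi/2), Real.sin x * f (Real.cos x) := by
  rw [intervalIntegral.integral_of_le zero_le_one, MeasureTheory.integral_Ioc_eq_integral_Ioo,
    ← cos_image_Ioo,
    MeasureTheory.integral_image_eq_integral_abs_deriv_smul measurableSet_Ioo
      (fun x _ => (Real.hasDerivAt_cos x).hasDerivWithinAt)
      (Real.injOn_cos.mono (Set.Ioo_subset_Icc_self.trans (Set.Icc_subset_Icc le_rfl (by linarith [Real.pi_pos]))))]
  refine MeasureTheory.setIntegral_congr_fun measurableSet_Ioo (fun x hx => ?_)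
  have hs : 0 ≤ Real.sin x := Real.sin_nonneg_of_nonneg_of_le_pi hx.1.le
    (by linarith [hx.2, Real.pi_pos])
  simp [abs_of_nonneg hs, smul_eq_mul]

lemma sqrt_one_sub_cos_sq {x : ℝ} (hx : x ∈ Set.Ioo 0 (Real.pi/2)) :
    Real.sqrt (1 - Real.cos x ^ 2) = Real.sin x := by
  rw [show (1 : ℝ) - Real.cos x ^ 2 = Real.sin x ^ 2 by
      have := Real.sin_sq_add_cos_sq x; linarith]
  exact Real.sqrt_sq (Real.sin_nonneg_of_nonneg_of_le_pi hx.1.le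
    (by linarith [hx.2, Real.pi_pos]))

lemma trigE (k : ℝ) :
    ellE k = ∫ x in (0:ℝ)..(Real.pi/2), Real.sqrt (1 - k ^ 2 * Real.cos x ^ 2) := by
  rw [ellE, cov, intervalIntegral.integral_of_le (by positivity),
    MeasureTheory.integral_Ioc_eq_integral_Ioo]
  refine MeasureTheory.setIntegral_congr_fun measurableSet_Ioo (fun x hx => ?_)
  have hs : 0 < Real.sin x := Real.sin_pos_of_pos_of_lt_pi hx.1
    (by linarith [hx.2, Real.pi_pos])
  rw [sqrt_one_sub_cos_sq hx]
  field_simp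

lemma trigK (k : ℝ) :
    ellK k = ∫ x in (0:ℝ)..(Real.pi/2), 1 / Real.sqrt (1 - k ^ 2 * Real.cos x ^ 2) := by
  rw [ellK, cov, intervalIntegral.integral_of_le (by positivity),
    MeasureTheory.integral_Ioc_eq_integral_Ioo]
  refine MeasureTheory.setIntegral_congr_fun measurableSet_Ioo (fun x hx => ?_)
  have hs : 0 < Real.sin x := Real.sin_pos_of_pos_of_lt_pi hx.1
    (by linarith [hx.2, Real.pi_pos])
  rw [sqrt_one_sub_cos_sq hx]
  rcases eq_or_ne (Real.sqrt (1 - k ^ 2 * Real.cos x ^ 2)) 0 with h | h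
  · simp [h]
  · field_simp


noncomputable def Gf (k A P : ℝ) (x : ℝ) : ℝ :=
  A * Real.sqrt (1 - k ^ 2 * Real.cos x ^ 2) - P / Real.sqrt (1 - k ^ 2 * Real.cos x ^ 2)

lemma wpos {k : ℝ} (hk : k ^ 2 < 1) (x : ℝ) : 0 < 1 - k ^ 2 * Real.cos x ^ 2 := by
  nlinarith [Real.cos_sq_le_one x, sq_nonneg k, sq_nonneg (Real.cos x)]

lemma sqrt_w_ne {k : ℝ} (hk : k ^ 2 < 1) (x : ℝ) :
    Real.sqrt (1 - k ^ 2 * Real.cos x ^ 2) ≠ 0 :=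
  (Real.sqrt_pos.2 (wpos hk x)).ne'

lemma qcont (k : ℝ) : Continuous (fun x => Real.sqrt (1 - k ^ 2 * Real.cos x ^ 2)) := by
  fun_prop

lemma Gf_cont (k A P : ℝ) (hk : k ^ 2 < 1) : Continuous (Gf k A P) := by
  unfold Gf
  exact (continuous_const.mul (qcont k)).sub (continuous_const.div (qcont k) (sqrt_w_ne hk))

lemma Gf_period (k A P x : ℝ) : Gf k A P (x + Real.pi) = Gf k A P x := by
  unfold Gf; rw [Real.cos_add_pi]; ring_nf

lemma Gf_reflect (k A P x : ℝ) : Gf k A P (Real.pi - x) = Gf k A P x := by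
  unfold Gf; rw [Real.cos_pi_sub]; ring_nf

lemma Gf_integral (k A P : ℝ) (hk : k ^ 2 < 1) :
    ∫ x in (0:ℝ)..(2 * Real.pi), Gf k A P x
      = 4 * ∫ x in (0:ℝ)..(Real.pi / 2), Gf k A P x := by
  have hc := Gf_cont k A P hk
  have h1 : ∫ x in Real.pi..(2 * Real.pi), Gf k A P x = ∫ x in (0:ℝ)..Real.pi, Gf k A P x := by
    have h := intervalIntegral.integral_comp_add_right (a := (0:ℝ)) (b := Real.pi)
      (Gf k A P) Real.pi
    rw [zero_add] at h
    rw [show (2:ℝ) * Real.pi = Real.pi + Real.pi by ring, ← h]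
    exact intervalIntegral.integral_congr (fun x _ => Gf_period k A P x)
  have h2 : ∫ x in (Real.pi/2)..Real.pi, Gf k A P x
      = ∫ x in (0:ℝ)..(Real.pi/2), Gf k A P x := by
    have h := intervalIntegral.integral_comp_sub_left (a := (0:ℝ)) (b := Real.pi/2)
      (Gf k A P) Real.pi
    rw [sub_zero, show Real.pi - Real.pi/2 = Real.pi/2 by ring] at h
    rw [← h]
    exact intervalIntegral.integral_congr (fun x _ => Gf_reflect k A P x)
  have e1 : ∫ x in (0:ℝ)..(2*Real.pi), Gf k A P x
      = (∫ x in (0:ℝ)..Real.pi, Gf k A P x) + ∫ x in Real.pi..(2*Real.pi), Gf k A P x :=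
    (intervalIntegral.integral_add_adjacent_intervals (hc.intervalIntegrable _ _)
      (hc.intervalIntegrable _ _)).symm
  have e2 : ∫ x in (0:ℝ)..Real.pi, Gf k A P x
      = (∫ x in (0:ℝ)..(Real.pi/2), Gf k A P x) + ∫ x in (Real.pi/2)..Real.pi, Gf k A P x :=
    (intervalIntegral.integral_add_adjacent_intervals (hc.intervalIntegrable _ _)
      (hc.intervalIntegrable _ _)).symm
  rw [e1, h1, e2, h2]; ring

lemma Gf_split (k A P : ℝ) (hk : k ^ 2 < 1) :
    ∫ x in (0:ℝ)..(Real.pi/2), Gf k A P x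
      = A * (∫ x in (0:ℝ)..(Real.pi/2), Real.sqrt (1 - k ^ 2 * Real.cos x ^ 2))
        - P * ∫ x in (0:ℝ)..(Real.pi/2), 1 / Real.sqrt (1 - k ^ 2 * Real.cos x ^ 2) := by
  have hqc := qcont k
  have h2c : Continuous (fun x => 1 / Real.sqrt (1 - k ^ 2 * Real.cos x ^ 2)) :=
    continuous_const.div hqc (sqrt_w_ne hk)
  rw [← intervalIntegral.integral_const_mul, ← intervalIntegral.integral_const_mul,
    ← intervalIntegral.integral_sub (f := fun x => A * Real.sqrt (1 - k ^ 2 * Real.cos x ^ 2))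
      (g := fun x => P * (1 / Real.sqrt (1 - k ^ 2 * Real.cos x ^ 2)))
      ((continuous_const.mul hqc).intervalIntegrable _ _)
      ((continuous_const.mul h2c).intervalIntegrable _ _)]
  exact intervalIntegral.integral_congr (fun x _ => by simp [Gf, mul_one_div, div_eq_mul_inv])

lemma core (M N : ℝ) (h1 : 1 ≤ M) (h2 : 1 ≤ N) (h3 : N ≤ M) :
    Real.sqrt 2 * Real.pi *
      ∫ x in (0 : ℝ)..(2 * Real.pi),
        (M ^ 2 + 2 * M * N + N ^ 2 - (M ^ 2 - N ^ 2) * Real.cos (2 * x)) /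
          Real.sqrt (M ^ 2 + 4 * M * N + N ^ 2 -
            (M ^ 2 - N ^ 2) * Real.cos (2 * x)) =
    8 * Real.pi *
      (Real.sqrt (M ^ 2 + 2 * M * N) *
          ellE (Real.sqrt ((M ^ 2 - N ^ 2) / (M ^ 2 + 2 * M * N))) -
        M * N / Real.sqrt (M ^ 2 + 2 * M * N) *
          ellK (Real.sqrt ((M ^ 2 - N ^ 2) / (M ^ 2 + 2 * M * N)))) := by
  have hA : (0:ℝ) < M ^ 2 + 2 * M * N := by nlinarith
  have hc0 : (0:ℝ) ≤ M ^ 2 - N ^ 2 := by nlinarith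
  have hcA : M ^ 2 - N ^ 2 < M ^ 2 + 2 * M * N := by nlinarith
  set k := Real.sqrt ((M ^ 2 - N ^ 2) / (M ^ 2 + 2 * M * N)) with hkdef
  have hk2 : k ^ 2 = (M ^ 2 - N ^ 2) / (M ^ 2 + 2 * M * N) :=
    Real.sq_sqrt (div_nonneg hc0 hA.le)
  have hck : (M ^ 2 + 2 * M * N) * k ^ 2 = M ^ 2 - N ^ 2 := by
    rw [hk2]; field_simp
  have hklt : k ^ 2 < 1 := by rw [hk2]; exact (div_lt_one hA).2 hcA
  have hsA : 0 < Real.sqrt (M ^ 2 + 2 * M * N) := Real.sqrt_pos.2 hA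
  have hs2 : (0:ℝ) < Real.sqrt 2 := by positivity
  have hsA2 : Real.sqrt (M ^ 2 + 2 * M * N) * Real.sqrt (M ^ 2 + 2 * M * N)
      = M ^ 2 + 2 * M * N := Real.mul_self_sqrt hA.le
  have h22 : Real.sqrt 2 * Real.sqrt 2 = 2 := Real.mul_self_sqrt (by norm_num)
  have hpt : ∀ x : ℝ,
      (M ^ 2 + 2 * M * N + N ^ 2 - (M ^ 2 - N ^ 2) * Real.cos (2 * x)) /
          Real.sqrt (M ^ 2 + 4 * M * N + N ^ 2 - (M ^ 2 - N ^ 2) * Real.cos (2 * x))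
        = Real.sqrt 2 / Real.sqrt (M ^ 2 + 2 * M * N)
            * Gf k (M ^ 2 + 2 * M * N) (M * N) x := by
    intro x
    have hc2 : Real.cos (2 * x) = 2 * Real.cos x ^ 2 - 1 := Real.cos_two_mul x
    have hw : 0 < 1 - k ^ 2 * Real.cos x ^ 2 := wpos hklt x
    have hsw : 0 < Real.sqrt (1 - k ^ 2 * Real.cos x ^ 2) := Real.sqrt_pos.2 hw
    have hsw2 : Real.sqrt (1 - k ^ 2 * Real.cos x ^ 2) * Real.sqrt (1 - k ^ 2 * Real.cos x ^ 2)
        = 1 - k ^ 2 * Real.cos x ^ 2 := Real.mul_self_sqrt hw.le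
    have harg : M ^ 2 + 4 * M * N + N ^ 2 - (M ^ 2 - N ^ 2) * Real.cos (2 * x)
        = 2 * ((M ^ 2 + 2 * M * N) * (1 - k ^ 2 * Real.cos x ^ 2)) := by
      rw [hc2]; linear_combination (2 * Real.cos x ^ 2) * hck
    have hnum : M ^ 2 + 2 * M * N + N ^ 2 - (M ^ 2 - N ^ 2) * Real.cos (2 * x)
        = 2 * ((M ^ 2 + 2 * M * N) * (1 - k ^ 2 * Real.cos x ^ 2) - M * N) := by
      rw [hc2]; linear_combination (2 * Real.cos x ^ 2) * hck
    rw [harg, hnum, Real.sqrt_mul (by norm_num : (0:ℝ) ≤ 2),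
      Real.sqrt_mul hA.le]
    simp only [Gf]
    set a := Real.sqrt (M ^ 2 + 2 * M * N) with hadef
    set s := Real.sqrt 2 with hsdef
    set u := 1 - k ^ 2 * Real.cos x ^ 2 with hudef
    set w := Real.sqrt u with hwdef
    field_simp
    linear_combination (-((M + 2 * N) * w ^ 2 - N)) * h22 + (-2 * (M + 2 * N)) * hsw2
  rw [intervalIntegral.integral_congr (g := fun x => Real.sqrt 2 / Real.sqrt (M ^ 2 + 2 * M * N)
      * Gf k (M ^ 2 + 2 * M * N) (M * N) x) (fun x _ => hpt x),
    intervalIntegral.integral_const_mul, Gf_integral _ _ _ hklt, Gf_split _ _ _ hklt,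
    ← trigE, ← trigK]
  have hE := trigE k
  have hK := trigK k
  field_simp
  linear_combination (4 * M * ((M + 2 * N) * ellE k - N * ellK k)) * h22
    - (8 * ellE k) * (Real.sq_sqrt (by nlinarith : (0:ℝ) ≤ M * (M + 2 * N)))

/-- The area of the torus `M_{m,n} ⊂ S⁵` in terms of complete elliptic integrals:
`√2·π·∫₀^{2π} (m² + 2mn + n² − (m² − n²)cos 2x)/√(m² + 4mn + n² − (m² − n²)cos 2x) dx
 = 8π·(√(m² + 2mn)·E(k) − (mn/√(m² + 2mn))·K(k))` with `k = √((m² − n²)/(m² + 2mn))`. -/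
theorem volume_MN_elliptic (m n : ℕ) (hn : 0 < n) (hmn : n ≤ m) :
    Real.sqrt 2 * Real.pi *
      ∫ x in (0 : ℝ)..(2 * Real.pi),
        ((m : ℝ) ^ 2 + 2 * m * n + n ^ 2 - ((m : ℝ) ^ 2 - n ^ 2) * Real.cos (2 * x)) /
          Real.sqrt ((m : ℝ) ^ 2 + 4 * m * n + n ^ 2 -
            ((m : ℝ) ^ 2 - n ^ 2) * Real.cos (2 * x)) =
    8 * Real.pi *
      (Real.sqrt ((m : ℝ) ^ 2 + 2 * m * n) *
          ellE (Real.sqrt (((m : ℝ) ^ 2 - n ^ 2) / ((m : ℝ) ^ 2 + 2 * m * n))) -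
        (m : ℝ) * n / Real.sqrt ((m : ℝ) ^ 2 + 2 * m * n) *
          ellK (Real.sqrt (((m : ℝ) ^ 2 - n ^ 2) / ((m : ℝ) ^ 2 + 2 * m * n)))) := by
  exact core (m : ℝ) (n : ℝ) (by exact_mod_cast hn.trans_le hmn) (by exact_mod_cast hn)
    (by exact_mod_cast hmn)
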